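/- Let 0 < r₁ < r₂ ≤ 𝐫. Assume: (i) there exist a constant c > 0 and N ∈ ℕ such that for every n ∈ ℕ and every real λ with 2ⁿ ≤ λ < 2^{n+1} and 2^{n−N} > 𝐫⁻¹, one has ε_λ ≤ c · Σ_{j=−N}^{N} ε_{2^{n+j}}; (ii) Σ_{n ∈ ℕ, 2ⁿ ≥ 𝐫⁻¹} ε_{2ⁿ} < ∞; (iii) for every λ ≥ 𝐫⁻¹ and every r ∈ (r₁, r₂), one has f(r/λ) − f(r₁/λ) ≥ −ε_λ. Then f(r) converges as r → 0⁺, either to a real number or to −∞, and in both cases lim_{r→0⁺} f(r) = liminf_{r→0⁺} f(r). -/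

import Mathlib

open Filter Set Topology

private lemma tail_summable {E : ℕ → ℝ} (hE : Summable E) (M : ℕ) :
    Summable (fun k => E (k + M)) := (summable_nat_add_iff M).2 hE

private lemma sum_Icc_le_tail {E : ℕ → ℝ} (hE0 : ∀ n, 0 ≤ E n) (hE : Summable E)
    (M n₁ n₂ : ℕ) (j : ℤ) (hj : (M : ℤ) ≤ (n₁ : ℤ) + j) :
    ∑ i ∈ Finset.Icc n₁ n₂, E (((i : ℤ) + j).toNat) ≤ ∑' k, E (k + M) := by
  have key : ∀ i ∈ Finset.Icc n₁ n₂, E (((i : ℤ) + j).toNat)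
      = E ((((i : ℤ) + j).toNat - M) + M) := by
    intro i hi
    have hi1 : n₁ ≤ i := (Finset.mem_Icc.1 hi).1
    congr 1
    omega
  rw [Finset.sum_congr rfl key]
  have hinj : ∀ x ∈ Finset.Icc n₁ n₂, ∀ y ∈ Finset.Icc n₁ n₂,
      (((x : ℤ) + j).toNat - M) = (((y : ℤ) + j).toNat - M) → x = y := by
    intro x hx y hy hxy
    have hx1 : n₁ ≤ x := (Finset.mem_Icc.1 hx).1
    have hy1 : n₁ ≤ y := (Finset.mem_Icc.1 hy).1
    omega
  have himg := Finset.sum_image (s := Finset.Icc n₁ n₂) (f := fun k => E (k + M))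
    (g := fun i => ((i : ℤ) + j).toNat - M) hinj
  rw [← himg]
  exact Summable.sum_le_tsum _ (fun k _ => hE0 _) (tail_summable hE M)

/-- Convergence test (Lemma on convergence, part (1)): under the dyadic comparability
condition (i), summability (ii), and the one-sided oscillation bound (iii), the function
`f` converges as `r → 0⁺` (within `(0, R]`) to its liminf, which is a real number or `−∞`. -/
theorem convergence_test_part1 (R : ℝ) (hR0 : 0 < R) (hR1 : R ≤ 1)
    (f : ℝ → ℝ) (ε : ℝ → ℝ)
    (hε : ∀ l : ℝ, R⁻¹ ≤ l → 0 < ε l)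
    (r₁ r₂ : ℝ) (hr₁ : 0 < r₁) (hr₁₂ : r₁ < r₂) (hr₂ : r₂ ≤ R)
    (h1 : ∃ c > (0 : ℝ), ∃ N : ℕ, ∀ (n : ℕ) (l : ℝ),
      (2 : ℝ) ^ n ≤ l → l < (2 : ℝ) ^ (n + 1) → R⁻¹ < (2 : ℝ) ^ ((n : ℤ) - (N : ℤ)) →
      ε l ≤ c * ∑ j ∈ Finset.Icc (-(N : ℤ)) (N : ℤ), ε ((2 : ℝ) ^ ((n : ℤ) + j)))
    (h2 : Summable fun n : ℕ => if R⁻¹ ≤ (2 : ℝ) ^ n then ε ((2 : ℝ) ^ n) else 0)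
    (h3 : ∀ l : ℝ, R⁻¹ ≤ l → ∀ r ∈ Set.Ioo r₁ r₂, f (r / l) - f (r₁ / l) ≥ -ε l) :
    Filter.liminf (fun r => (f r : EReal)) (𝓝[Set.Ioc 0 R] 0) ≠ ⊤ ∧
    Filter.Tendsto (fun r => (f r : EReal)) (𝓝[Set.Ioc 0 R] 0)
      (𝓝 (Filter.liminf (fun r => (f r : EReal)) (𝓝[Set.Ioc 0 R] 0))) := by
  classical
  obtain ⟨c, hc, N, h1⟩ := h1
  have hR0' : (0 : ℝ) < R⁻¹ := inv_pos.2 hR0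
  set q : ℝ := r₂ / r₁ with hq_def
  have hq : 1 < q := (one_lt_div hr₁).2 hr₁₂
  have hq0 : 0 < q := lt_trans one_pos hq
  obtain ⟨K, hK2⟩ : ∃ K : ℕ, 2 < q ^ K := pow_unbounded_of_one_lt 2 hq
  have hK0 : K ≠ 0 := by rintro rfl; norm_num at hK2
  set ρ : ℝ := (2 : ℝ) ^ ((K : ℝ)⁻¹) with hρ_def
  have hρ1 : 1 < ρ := by
    rw [hρ_def]
    refine Real.one_lt_rpow_iff_of_pos two_pos |>.2 (Or.inl ⟨one_lt_two,
      inv_pos.2 (by exact_mod_cast Nat.pos_of_ne_zero hK0)⟩)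
  have hρK : ρ ^ K = 2 := by
    rw [hρ_def, ← Real.rpow_natCast ((2 : ℝ) ^ ((K : ℝ)⁻¹)) K, ← Real.rpow_mul (by norm_num)]
    rw [inv_mul_cancel₀ (by exact_mod_cast hK0), Real.rpow_one]
  have hρ0 : (0 : ℝ) < ρ := lt_trans one_pos hρ1
  have hρq : ρ < q := by
    refine lt_of_pow_lt_pow_left₀ K hq0.le ?_
    rw [hρK]; exact hK2
  obtain ⟨M₀, hM₀⟩ : ∃ M₀ : ℕ, R⁻¹ < 2 ^ M₀ := pow_unbounded_of_one_lt R⁻¹ one_lt_two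
  set n₀ : ℕ := N + M₀ + 1 with hn₀_def
  set E : ℕ → ℝ := fun n => if R⁻¹ ≤ (2 : ℝ) ^ n then ε ((2 : ℝ) ^ n) else 0 with hE_def
  have hEsum : Summable E := h2
  have hE0 : ∀ n, 0 ≤ E n := by
    intro n
    by_cases h : R⁻¹ ≤ (2 : ℝ) ^ n
    · simp only [hE_def, if_pos h]; exact (hε _ h).le
    · simp only [hE_def, if_neg h]; exact le_rfl
  have hpow_ge : ∀ n : ℕ, M₀ ≤ n → R⁻¹ ≤ (2 : ℝ) ^ n := fun n hn =>
    le_trans hM₀.le (pow_le_pow_right₀ one_le_two hn)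
  have hEε : ∀ n : ℕ, M₀ ≤ n → E n = ε ((2 : ℝ) ^ n) := fun n hn => if_pos (hpow_ge n hn)
  set T : ℕ → ℝ := fun M => ∑' k, E (k + M) with hT_def
  have hT0 : ∀ M, 0 ≤ T M := fun M => tsum_nonneg fun k => hE0 _
  set W : ℕ → ℝ := fun n =>
    c * ∑ j ∈ Finset.Icc (-(N : ℤ)) ((N : ℤ) + 1), E (((n : ℤ) + j).toNat) with hW_def
  have hW0 : ∀ n, 0 ≤ W n := fun n =>
    mul_nonneg hc.le (Finset.sum_nonneg fun j _ => hE0 _)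
  -- ε at integer powers of two equals E
  have hεE : ∀ m : ℤ, (M₀ : ℤ) ≤ m → ε ((2 : ℝ) ^ m) = E m.toNat := by
    intro m hm
    have h0 : (0 : ℤ) ≤ m := le_trans (Int.natCast_nonneg M₀) hm
    have hcast : (2 : ℝ) ^ m = (2 : ℝ) ^ (m.toNat) := by
      rw [← zpow_natCast]; congr 1; omega
    rw [hcast, hEε m.toNat (by omega)]
  -- L1 : single ε bound on a closed dyadic window
  have hL1 : ∀ n : ℕ, n₀ ≤ n → ∀ l : ℝ, (2 : ℝ) ^ n ≤ l → l ≤ (2 : ℝ) ^ (n + 1) →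
      ε l ≤ W n := by
    intro n hn l hl1 hl2
    have hside : ∀ n' : ℕ, n ≤ n' → R⁻¹ < (2 : ℝ) ^ ((n' : ℤ) - (N : ℤ)) := by
      intro n' hn'
      calc R⁻¹ < (2 : ℝ) ^ M₀ := hM₀
        _ ≤ (2 : ℝ) ^ ((n' : ℤ) - (N : ℤ)) := by
          rw [show ((n' : ℤ) - (N : ℤ)) = ((n' - N : ℕ) : ℤ) by omega, zpow_natCast]
          exact pow_le_pow_right₀ one_le_two (by omega)
    rcases lt_or_eq_of_le hl2 with hlt | heq
    · refine le_trans (h1 n l hl1 hlt (hside n le_rfl)) ?_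
      rw [hW_def]
      refine mul_le_mul_of_nonneg_left ?_ hc.le
      have heq2 : ∀ j ∈ Finset.Icc (-(N : ℤ)) (N : ℤ),
          ε ((2 : ℝ) ^ ((n : ℤ) + j)) = E (((n : ℤ) + j).toNat) := by
        intro j hj
        obtain ⟨hj1, hj2⟩ := Finset.mem_Icc.1 hj
        exact hεE _ (by omega)
      rw [Finset.sum_congr rfl heq2]
      exact Finset.sum_le_sum_of_subset_of_nonneg
        (Finset.Icc_subset_Icc le_rfl (by omega)) (fun j _ _ => hE0 _)
    · have hlt2 : l < (2 : ℝ) ^ (n + 1 + 1) :=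
        lt_of_le_of_lt hl2 (pow_lt_pow_right₀ one_lt_two (by omega))
      refine le_trans (h1 (n + 1) l heq.ge hlt2 (hside (n + 1) (by omega))) ?_
      rw [hW_def]
      refine mul_le_mul_of_nonneg_left ?_ hc.le
      have heq2 : ∀ j ∈ Finset.Icc (-(N : ℤ)) (N : ℤ),
          ε ((2 : ℝ) ^ (((n + 1 : ℕ) : ℤ) + j)) = E (((n : ℤ) + (j + 1)).toNat) := by
        intro j hj
        obtain ⟨hj1, hj2⟩ := Finset.mem_Icc.1 hj
        rw [show (((n + 1 : ℕ) : ℤ) + j) = ((n : ℤ) + (j + 1)) by push_cast; ring]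
        exact hεE _ (by omega)
      rw [Finset.sum_congr rfl heq2]
      have hinj : ∀ x ∈ Finset.Icc (-(N : ℤ)) (N : ℤ), ∀ y ∈ Finset.Icc (-(N : ℤ)) (N : ℤ),
          x + 1 = y + 1 → x = y := fun x _ y _ h => by omega
      have himg := Finset.sum_image (s := Finset.Icc (-(N : ℤ)) (N : ℤ))
        (f := fun j' => E (((n : ℤ) + j').toNat)) (g := fun j => j + 1) hinj
      rw [← himg]
      refine Finset.sum_le_sum_of_subset_of_nonneg ?_ (fun j _ _ => hE0 _)
      intro x hx
      simp only [Finset.mem_image, Finset.mem_Icc] at hx ⊢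
      obtain ⟨j, ⟨hj1, hj2⟩, rfl⟩ := hx
      omega
  -- L2 : basic step
  have hL2 : ∀ lam lam' : ℝ, R⁻¹ ≤ lam → 0 < lam' → lam' < lam → lam * r₁ < lam' * r₂ →
      f (r₁ / lam) ≤ f (r₁ / lam') + ε lam := by
    intro lam lam' hlam hlam'0 hlt hratio
    have hlam0 : 0 < lam := lt_trans hlam'0 hlt
    have hr : r₁ * lam / lam' ∈ Set.Ioo r₁ r₂ := by
      constructor
      · rw [lt_div_iff₀ hlam'0]; nlinarith
      · rw [div_lt_iff₀ hlam'0]; nlinarith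
    have hkey := h3 lam hlam _ hr
    have harg : r₁ * lam / lam' / lam = r₁ / lam' := by
      field_simp
    rw [harg] at hkey
    linarith
  -- L3 : boosted step within one closed dyadic window
  have hL3 : ∀ n : ℕ, n₀ ≤ n → ∀ lam' lam : ℝ, (2 : ℝ) ^ n ≤ lam' → lam' ≤ lam →
      lam ≤ (2 : ℝ) ^ (n + 1) → f (r₁ / lam) ≤ f (r₁ / lam') + (K : ℝ) * W n := by
    intro n hn lam' lam hlow hle hhigh
    have hlam'0 : 0 < lam' := lt_of_lt_of_le (pow_pos two_pos n) hlow
    have hRinv_le : R⁻¹ ≤ (2 : ℝ) ^ n := hpow_ge n (by omega)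
    set μ : ℕ → ℝ := fun k => min (lam' * ρ ^ k) lam with hμ_def
    have hμ0 : μ 0 = lam' := by
      simp only [hμ_def, pow_zero, mul_one]
      exact min_eq_left hle
    have hμ_ge : ∀ k, lam' ≤ μ k := by
      intro k
      refine le_min ?_ hle
      exact le_mul_of_one_le_right hlam'0.le (one_le_pow₀ hρ1.le)
    have key : ∀ k : ℕ, f (r₁ / μ k) ≤ f (r₁ / lam') + (k : ℝ) * W n := by
      intro k
      induction k with
      | zero => rw [hμ0]; simp
      | succ k ih =>
        by_cases hcase : lam ≤ lam' * ρ ^ k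
        · have he1 : μ k = lam := min_eq_right hcase
          have he2 : μ (k + 1) = lam := by
            refine min_eq_right (le_trans hcase ?_)
            rw [pow_succ, ← mul_assoc]
            exact le_mul_of_one_le_right (mul_nonneg hlam'0.le (pow_pos hρ0 k).le) hρ1.le
          rw [he2, ← he1]
          refine le_trans ih ?_
          have : (k : ℝ) * W n ≤ ((k : ℕ) + 1 : ℝ) * W n := by nlinarith [hW0 n]
          push_cast at this ⊢
          linarith
        · push_neg at hcase
          have hμk : μ k = lam' * ρ ^ k := min_eq_left hcase.le
          have hμk0 : 0 < μ k := lt_of_lt_of_le hlam'0 (hμ_ge k)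
          have hltμ : μ k < μ (k + 1) := by
            rw [hμk]
            refine lt_min ?_ hcase
            rw [pow_succ, ← mul_assoc]
            exact lt_mul_of_one_lt_right (mul_pos hlam'0 (pow_pos hρ0 k)) hρ1
          have hub : μ (k + 1) ≤ ρ * μ k := by
            rw [hμk]
            refine le_trans (min_le_left _ _) (le_of_eq ?_)
            rw [pow_succ]; ring
          have hμlam : μ (k + 1) ≤ lam := min_le_right _ _
          have hμlow : (2 : ℝ) ^ n ≤ μ (k + 1) :=
            le_trans hlow (le_trans (hμ_ge k) hltμ.le)
          have hRle : R⁻¹ ≤ μ (k + 1) := le_trans hRinv_le hμlow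
          have hρr : ρ * r₁ < r₂ := by
            have hqr : q * r₁ = r₂ := by
              rw [hq_def]; field_simp
            calc ρ * r₁ < q * r₁ := mul_lt_mul_of_pos_right hρq hr₁
              _ = r₂ := hqr
          have hratio : μ (k + 1) * r₁ < μ k * r₂ := by
            calc μ (k + 1) * r₁ ≤ (ρ * μ k) * r₁ := mul_le_mul_of_nonneg_right hub hr₁.le
              _ = μ k * (ρ * r₁) := by ring
              _ < μ k * r₂ := mul_lt_mul_of_pos_left hρr hμk0
          have hstep := hL2 (μ (k + 1)) (μ k) hRle hμk0 hltμ hratio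
          have hεb : ε (μ (k + 1)) ≤ W n := hL1 n hn _ hμlow (le_trans hμlam hhigh)
          calc f (r₁ / μ (k + 1)) ≤ f (r₁ / μ k) + ε (μ (k + 1)) := hstep
            _ ≤ f (r₁ / lam') + (k : ℝ) * W n + W n := by linarith
            _ = f (r₁ / lam') + ((k : ℕ) + 1 : ℝ) * W n := by ring
            _ = f (r₁ / lam') + (((k + 1 : ℕ)) : ℝ) * W n := by push_cast; ring
    have hμK : μ K = lam := by
      refine min_eq_right ?_
      rw [hρK]
      calc lam ≤ (2 : ℝ) ^ (n + 1) := hhigh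
        _ = 2 * (2 : ℝ) ^ n := by ring
        _ ≤ 2 * lam' := by linarith
        _ = lam' * 2 := by ring
    have := key K
    rwa [hμK] at this
  -- L4 : chain across dyadic windows
  have hL4 : ∀ n₁ : ℕ, n₀ ≤ n₁ → ∀ n₂ : ℕ, n₁ ≤ n₂ →
      ∀ lam' lam : ℝ, (2 : ℝ) ^ n₁ ≤ lam' → lam' ≤ (2 : ℝ) ^ (n₁ + 1) →
      (2 : ℝ) ^ n₂ ≤ lam → lam ≤ (2 : ℝ) ^ (n₂ + 1) → lam' ≤ lam →
      f (r₁ / lam) ≤ f (r₁ / lam') + ∑ i ∈ Finset.Icc n₁ n₂, (K : ℝ) * W i := by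
    intro n₁ hn₁ n₂ hn₂
    induction n₂, hn₂ using Nat.le_induction with
    | base =>
      intro lam' lam h1' h2' h3' h4' h5'
      simpa [Finset.Icc_self] using hL3 n₁ hn₁ lam' lam h1' h5' h4'
    | succ n₂ hn₂m ih =>
      intro lam' lam h1' h2' h3' h4' h5'
      have step1 : f (r₁ / lam) ≤ f (r₁ / (2 : ℝ) ^ (n₂ + 1)) + (K : ℝ) * W (n₂ + 1) :=
        hL3 (n₂ + 1) (by omega) _ lam le_rfl h3' h4'
      have step2 : f (r₁ / (2 : ℝ) ^ (n₂ + 1)) ≤ f (r₁ / lam')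
          + ∑ i ∈ Finset.Icc n₁ n₂, (K : ℝ) * W i := by
        refine ih lam' ((2 : ℝ) ^ (n₂ + 1)) h1' h2'
          (pow_le_pow_right₀ one_le_two (by omega)) le_rfl
          (le_trans h2' (pow_le_pow_right₀ one_le_two (by omega)))
      rw [Finset.sum_Icc_succ_top (by omega : n₁ ≤ n₂ + 1)]
      linarith
  -- the tail-sum bound for a block of W's
  have hsumW : ∀ m n₁ n₂ : ℕ, n₀ ≤ m → m ≤ n₁ →
      ∑ i ∈ Finset.Icc n₁ n₂, W i ≤ c * ((2 * (N : ℝ) + 2) * T (m - N)) := by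
    intro m n₁ n₂ hm hmn
    have step1 : ∑ i ∈ Finset.Icc n₁ n₂, W i
        = c * ∑ j ∈ Finset.Icc (-(N : ℤ)) ((N : ℤ) + 1),
            ∑ i ∈ Finset.Icc n₁ n₂, E (((i : ℤ) + j).toNat) := by
      rw [hW_def, ← Finset.mul_sum, Finset.sum_comm]
    rw [step1]
    refine mul_le_mul_of_nonneg_left ?_ hc.le
    calc ∑ j ∈ Finset.Icc (-(N : ℤ)) ((N : ℤ) + 1),
          ∑ i ∈ Finset.Icc n₁ n₂, E (((i : ℤ) + j).toNat)
        ≤ ∑ j ∈ Finset.Icc (-(N : ℤ)) ((N : ℤ) + 1), T (m - N) := by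
          refine Finset.sum_le_sum ?_
          intro j hj
          obtain ⟨hj1, hj2⟩ := Finset.mem_Icc.1 hj
          exact sum_Icc_le_tail hE0 hEsum (m - N) n₁ n₂ j (by push_cast; omega)
      _ = (2 * (N : ℝ) + 2) * T (m - N) := by
          rw [Finset.sum_const, nsmul_eq_mul, Int.card_Icc]
          congr 1
          rw [show ((N : ℤ) + 1 + 1 - (-(N : ℤ))) = ((2 * N + 2 : ℕ) : ℤ) by push_cast; ring]
          rw [Int.toNat_natCast]
          push_cast; ring
  -- L5 : main oscillation bound
  have hL5 : ∀ m : ℕ, n₀ ≤ m → ∀ t s : ℝ, 0 < s → s ≤ t → t ≤ r₁ / 2 ^ m →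
      f s ≤ f t + (K : ℝ) * (c * ((2 * (N : ℝ) + 2) * T (m - N))) := by
    intro m hm t s hs0 hst ht
    have ht0 : 0 < t := lt_of_lt_of_le hs0 hst
    set lamt : ℝ := r₁ / t with hlamt_def
    set lams : ℝ := r₁ / s with hlams_def
    have hlamt0 : 0 < lamt := div_pos hr₁ ht0
    have hlams0 : 0 < lams := div_pos hr₁ hs0
    have hlamt_ge : (2 : ℝ) ^ m ≤ lamt := by
      rw [hlamt_def, le_div_iff₀ ht0]
      rw [le_div_iff₀ (by positivity : (0:ℝ) < (2:ℝ) ^ m)] at ht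
      linarith
    have hts : lamt ≤ lams := by
      rw [hlamt_def, hlams_def, div_le_div_iff₀ ht0 hs0]
      nlinarith
    -- dyadic exponents
    have hm_le : (m : ℤ) ≤ Int.log 2 lamt := by
      refine (Int.zpow_le_iff_le_log one_lt_two hlamt0).1 ?_
      rw [show ((2:ℕ) : ℝ) = (2 : ℝ) by norm_num, zpow_natCast]
      exact hlamt_ge
    set n₁ : ℕ := (Int.log 2 lamt).toNat with hn₁_def
    set n₂ : ℕ := (Int.log 2 lams).toNat with hn₂_def
    have hn₁cast : (n₁ : ℤ) = Int.log 2 lamt := Int.toNat_of_nonneg (by omega)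
    have hlogmono : Int.log 2 lamt ≤ Int.log 2 lams := Int.log_mono_right hlamt0 hts
    have hn₂cast : (n₂ : ℤ) = Int.log 2 lams := Int.toNat_of_nonneg (by omega)
    have hmn₁ : m ≤ n₁ := by omega
    have hn₁₂ : n₁ ≤ n₂ := by omega
    have hlow₁ : (2 : ℝ) ^ n₁ ≤ lamt := by
      have := Int.zpow_log_le_self (b := 2) one_lt_two hlamt0
      rw [← hn₁cast, zpow_natCast] at this
      exact_mod_cast this
    have hupp₁ : lamt ≤ (2 : ℝ) ^ (n₁ + 1) := by
      have := (Int.lt_zpow_succ_log_self (b := 2) one_lt_two lamt).le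
      rw [show Int.log 2 lamt + 1 = ((n₁ + 1 : ℕ) : ℤ) by omega, zpow_natCast] at this
      exact_mod_cast this
    have hlow₂ : (2 : ℝ) ^ n₂ ≤ lams := by
      have := Int.zpow_log_le_self (b := 2) one_lt_two hlams0
      rw [← hn₂cast, zpow_natCast] at this
      exact_mod_cast this
    have hupp₂ : lams ≤ (2 : ℝ) ^ (n₂ + 1) := by
      have := (Int.lt_zpow_succ_log_self (b := 2) one_lt_two lams).le
      rw [show Int.log 2 lams + 1 = ((n₂ + 1 : ℕ) : ℤ) by omega, zpow_natCast] at this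
      exact_mod_cast this
    have hmain := hL4 n₁ (by omega) n₂ hn₁₂ lamt lams hlow₁ hupp₁ hlow₂ hupp₂ hts
    have hback_s : r₁ / lams = s := by
      rw [hlams_def]; field_simp
    have hback_t : r₁ / lamt = t := by
      rw [hlamt_def]; field_simp
    rw [hback_s, hback_t] at hmain
    refine le_trans hmain ?_
    have hsum_le : ∑ i ∈ Finset.Icc n₁ n₂, (K : ℝ) * W i
        ≤ (K : ℝ) * (c * ((2 * (N : ℝ) + 2) * T (m - N))) := by
      rw [← Finset.mul_sum]
      exact mul_le_mul_of_nonneg_left (hsumW m n₁ n₂ hm hmn₁) (by positivity)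
    linarith
  -- ============ filter endgame ============
  set l : Filter ℝ := 𝓝[Set.Ioc (0 : ℝ) R] (0 : ℝ) with hl_def
  haveI hlne : l.NeBot := by
    refine mem_closure_iff_nhdsWithin_neBot.1 ?_
    rw [closure_Ioc (ne_of_lt hR0)]
    exact ⟨le_rfl, hR0.le⟩
  set F : ℝ → EReal := fun r => (f r : EReal) with hF_def
  have hTtend : Tendsto (fun M : ℕ => (K : ℝ) * (c * ((2 * (N : ℝ) + 2) * T M)))
      atTop (𝓝 0) := by
    have h0 : Tendsto T atTop (𝓝 0) := tendsto_sum_nat_add E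
    have := h0.const_mul ((K : ℝ) * (c * (2 * (N : ℝ) + 2)))
    rw [mul_zero] at this
    refine this.congr (fun M => by ring)
  have hev_le : ∀ t : ℝ, 0 < t → ∀ᶠ s in l, 0 < s ∧ s ≤ t := by
    intro t ht
    have h1' : ∀ᶠ s in l, s ∈ Set.Ioc (0 : ℝ) R := eventually_mem_nhdsWithin
    have h2' : ∀ᶠ s in l, s < t :=
      eventually_nhdsWithin_of_eventually_nhds (Filter.Tendsto.eventually_lt_const ht tendsto_id)
    filter_upwards [h1', h2'] with s hs1 hs2
    exact ⟨hs1.1, hs2.le⟩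
  have hmain_ev : ∀ m : ℕ, n₀ ≤ m → ∀ t : ℝ, 0 < t → t ≤ r₁ / 2 ^ m →
      ∀ᶠ s in l, F s ≤ ((f t + (K : ℝ) * (c * ((2 * (N : ℝ) + 2) * T (m - N))) : ℝ) : EReal) := by
    intro m hm t ht0 htm
    filter_upwards [hev_le t ht0] with s hs
    exact EReal.coe_le_coe_iff.2 (hL5 m hm t s hs.1 hs.2 htm)
  -- (A) limsup is bounded above by a real number
  have ht₀0 : 0 < r₁ / 2 ^ n₀ := by positivity
  have hA : limsup F l ≤ ((f (r₁ / 2 ^ n₀)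
      + (K : ℝ) * (c * ((2 * (N : ℝ) + 2) * T (n₀ - N))) : ℝ) : EReal) :=
    limsup_le_of_le (by isBoundedDefault) (hmain_ev n₀ le_rfl _ ht₀0 le_rfl)
  have hinfsup : liminf F l ≤ limsup F l :=
    liminf_le_limsup (by isBoundedDefault) (by isBoundedDefault)
  have hliminf_ne_top : liminf F l ≠ ⊤ := by
    intro h
    have : (⊤ : EReal) ≤ _ := le_trans (h ▸ hinfsup) hA
    exact (EReal.coe_lt_top _).not_ge this
  -- (B) limsup ≤ liminf
  have hB : limsup F l ≤ liminf F l := by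
    refine le_of_forall_gt_imp_ge_of_dense ?_
    intro b hb
    rcases eq_or_ne b ⊤ with rfl | hbt
    · exact le_top
    · have hbtop : b < ⊤ := lt_of_le_of_ne le_top hbt
      obtain ⟨z, hz1, hz2⟩ := exists_between hb
      have hz_ne_top : z ≠ ⊤ := (lt_trans hz2 hbtop).ne
      have hz_ne_bot : z ≠ ⊥ := (lt_of_le_of_lt bot_le hz1).ne'
      obtain ⟨y, hy1, hy2⟩ := exists_between hz1
      have hy_ne_top : y ≠ ⊤ := (lt_trans hy2 (lt_of_le_of_ne le_top hz_ne_top)).ne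
      have hy_ne_bot : y ≠ ⊥ := (lt_of_le_of_lt bot_le hy1).ne'
      set zR : ℝ := z.toReal with hzR_def
      set yR : ℝ := y.toReal with hyR_def
      have hzz : (zR : EReal) = z := EReal.coe_toReal hz_ne_top hz_ne_bot
      have hyy : (yR : EReal) = y := EReal.coe_toReal hy_ne_top hy_ne_bot
      have hδ : 0 < zR - yR := by
        have : (yR : EReal) < (zR : EReal) := by rw [hzz, hyy]; exact hy2
        have := EReal.coe_lt_coe_iff.1 this
        linarith
      obtain ⟨M₁, hM₁⟩ := (eventually_atTop).1 (hTtend.eventually (gt_mem_nhds hδ))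
      set m : ℕ := max n₀ M₁ + N with hm_def
      have hmn₀ : n₀ ≤ m := by
        rw [hm_def]; exact le_trans (le_max_left _ _) (Nat.le_add_right _ _)
      have hmN : m - N = max n₀ M₁ := by rw [hm_def]; omega
      have hbound : (K : ℝ) * (c * ((2 * (N : ℝ) + 2) * T (m - N))) < zR - yR := by
        rw [hmN]; exact hM₁ _ (le_max_right _ _)
      have hfreq : ∃ᶠ r in l, F r < (yR : EReal) := by
        refine frequently_lt_of_liminf_lt (by isBoundedDefault) ?_
        rw [hyy]; exact hy1
      obtain ⟨t, htf, ht0, htm⟩ :=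
        (hfreq.and_eventually (hev_le (r₁ / 2 ^ m) (by positivity))).exists
      have hftR : f t < yR := EReal.coe_lt_coe_iff.1 htf
      have hev2 := hmain_ev m hmn₀ t ht0 htm
      have hlim : limsup F l
          ≤ ((f t + (K : ℝ) * (c * ((2 * (N : ℝ) + 2) * T (m - N))) : ℝ) : EReal) :=
        limsup_le_of_le (by isBoundedDefault) hev2
      refine le_trans hlim (le_of_lt ?_)
      have hcomp : (f t + (K : ℝ) * (c * ((2 * (N : ℝ) + 2) * T (m - N))) : ℝ) < zR := by
        linarith
      calc ((f t + (K : ℝ) * (c * ((2 * (N : ℝ) + 2) * T (m - N))) : ℝ) : EReal)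
          < (zR : EReal) := EReal.coe_lt_coe_iff.2 hcomp
        _ = z := hzz
        _ < b := hz2
  exact ⟨hliminf_ne_top,
    tendsto_of_le_liminf_of_limsup_le le_rfl hB (by isBoundedDefault) (by isBoundedDefault)⟩
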